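/- Let Δφ̃, Δψ be vectors and suppose S_{xy} = SₓΦΛΨᵀS_y with Λ having largest entry λ₁ and second-largest entry λ₂, ΨᵀS_yΨ = I, ΦᵀSₓΦ = I, and S_y^{1/2}ψᵗ a unit vector whose expansion in the orthonormal system {S_y^{1/2}ψᵢ} has first coefficient α₁ ≥ 0, with Δψ = ψᵗ − ψ₁. Then Δφ̃ᵀ S_{xy} Δψ ≤ (λ₁²(1−α₁)² + λ₂²(1−α₁²))^{1/2} · ‖Δφ̃‖_x. -/

import Mathlib

open Matrix

lemma quad_conj {n m : ℕ} (S : Matrix (Fin n) (Fin n) ℝ) (A : Matrix (Fin n) (Fin m) ℝ)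
    (x : Fin m → ℝ) :
    x ⬝ᵥ ((Aᵀ * S * A) *ᵥ x) = (A *ᵥ x) ⬝ᵥ (S *ᵥ (A *ᵥ x)) := by
  rw [← Matrix.mulVec_mulVec, ← Matrix.mulVec_mulVec, Matrix.dotProduct_mulVec,
    Matrix.vecMul_transpose]

lemma bessel {n m : ℕ} (S : Matrix (Fin n) (Fin n) ℝ) (hS : S.PosDef)
    (Φ : Matrix (Fin n) (Fin m) ℝ) (hΦ : Φᵀ * S * Φ = 1) (x : Fin n → ℝ) :
    (Φᵀ *ᵥ (S *ᵥ x)) ⬝ᵥ (Φᵀ *ᵥ (S *ᵥ x)) ≤ x ⬝ᵥ (S *ᵥ x) := by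
  have hSt : Sᵀ = S := hS.isHermitian
  set P : Matrix (Fin n) (Fin n) ℝ := Φ * Φᵀ with hPdef
  have hP : P * S * P = P := by
    have h1 : Φᵀ * S * Φ * Φᵀ = Φᵀ := by rw [hΦ, Matrix.one_mul]
    calc P * S * P = Φ * (Φᵀ * S * Φ * Φᵀ) := by
          simp only [hPdef, Matrix.mul_assoc]
      _ = P := by rw [h1]
  set M : Matrix (Fin n) (Fin n) ℝ := 1 - P * S with hMdef
  have hMt : Mᵀ = 1 - S * P := by
    simp [hMdef, hPdef, Matrix.transpose_sub, Matrix.transpose_mul, hSt, Matrix.mul_assoc]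
  have key : Mᵀ * S * M = S - S * P * S := by
    rw [hMt, hMdef]
    simp only [Matrix.sub_mul, Matrix.mul_sub, Matrix.one_mul, Matrix.mul_one,
      ← Matrix.mul_assoc]
    have h3 : S * P * S * P * S = S * P * S := by
      calc S * P * S * P * S = S * (P * S * P) * S := by simp only [Matrix.mul_assoc]
        _ = S * P * S := by rw [hP]
    rw [h3]
    abel
  have h0 : 0 ≤ x ⬝ᵥ ((Mᵀ * S * M) *ᵥ x) := by
    rw [quad_conj]
    have := hS.posSemidef.dotProduct_mulVec_nonneg (M *ᵥ x)
    simpa using this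
  rw [key] at h0
  have hsplit : x ⬝ᵥ ((S - S * P * S) *ᵥ x) = x ⬝ᵥ (S *ᵥ x) - x ⬝ᵥ ((S * P * S) *ᵥ x) := by
    rw [Matrix.sub_mulVec, dotProduct_sub]
  have heq : (Φᵀ *ᵥ (S *ᵥ x)) ⬝ᵥ (Φᵀ *ᵥ (S *ᵥ x)) = x ⬝ᵥ ((S * P * S) *ᵥ x) := by
    have h2 : S * P * S = (Φᵀ * S)ᵀ * (1 : Matrix (Fin m) (Fin m) ℝ) * (Φᵀ * S) := by
      simp [hPdef, Matrix.transpose_mul, hSt, Matrix.mul_assoc, Matrix.mul_one]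
    rw [h2, quad_conj, ← Matrix.mulVec_mulVec]
    simp
  rw [hsplit] at h0
  rw [heq]
  linarith

/-- Cauchy–Schwarz bound in the proof of Theorem 2.1:
`Δφ̃ᵀ S_{xy} Δψ ≤ (λ₁²(1−α₁)² + λ₂²(1−α₁²))^{1/2} · ‖Δφ̃‖_x`. -/
theorem stmt10 {p1 p2 p : ℕ} [NeZero p]
    (Sx : Matrix (Fin p1) (Fin p1) ℝ) (Sy : Matrix (Fin p2) (Fin p2) ℝ)
    (Sxy : Matrix (Fin p1) (Fin p2) ℝ)
    (hSxpd : Sx.PosDef) (hSypd : Sy.PosDef)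
    (Φ : Matrix (Fin p1) (Fin p) ℝ) (Ψ : Matrix (Fin p2) (Fin p) ℝ)
    (l : Fin p → ℝ) (lam1 lam2 : ℝ)
    (hlnn : ∀ i, 0 ≤ l i)
    (hlam1 : lam1 = l 0) (hlam2 : 0 ≤ lam2) (hlam21 : lam2 ≤ lam1)
    (hl2 : ∀ i : Fin p, i ≠ 0 → l i ≤ lam2)
    (hΦ : Φᵀ * Sx * Φ = 1) (hΨ : Ψᵀ * Sy * Ψ = 1)
    (hdecomp : Sxy = Sx * Φ * Matrix.diagonal l * Ψᵀ * Sy)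
    -- `ψ₁` : the first canonical vector, `ψᵗ` an `Sy`-unit vector with first
    -- expansion coefficient `α₁ = ψᵗᵀ Sy ψ₁ ≥ 0`
    (ψ1 : Fin p2 → ℝ) (hψ1 : ψ1 = fun j => Ψ j 0)
    (ψt : Fin p2 → ℝ) (hψt : ψt ⬝ᵥ (Sy *ᵥ ψt) = 1)
    (α1 : ℝ) (hα1 : α1 = ψt ⬝ᵥ (Sy *ᵥ ψ1)) (hα1nn : 0 ≤ α1)
    (Δφ' : Fin p1 → ℝ) (Δψ : Fin p2 → ℝ) (hΔψ : Δψ = ψt - ψ1) :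
    Δφ' ⬝ᵥ (Sxy *ᵥ Δψ) ≤
      Real.sqrt (lam1 ^ 2 * (1 - α1) ^ 2 + lam2 ^ 2 * (1 - α1 ^ 2)) *
        Real.sqrt (Δφ' ⬝ᵥ (Sx *ᵥ Δφ')) := by
  have hSyt : Syᵀ = Sy := hSypd.isHermitian
  have hSxt : Sxᵀ = Sx := hSxpd.isHermitian
  set e : Fin p → ℝ := Pi.single 0 1 with hedef
  set a : Fin p → ℝ := Φᵀ *ᵥ (Sx *ᵥ Δφ') with hadef
  set c : Fin p → ℝ := Ψᵀ *ᵥ (Sy *ᵥ ψt) with hcdef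
  set b : Fin p → ℝ := Ψᵀ *ᵥ (Sy *ᵥ Δψ) with hbdef
  have hψ1v : ψ1 = Ψ *ᵥ e := by
    rw [hψ1, hedef, Matrix.mulVec_single]
    funext j; simp
  have hb1 : Ψᵀ *ᵥ (Sy *ᵥ ψ1) = e := by
    rw [hψ1v, Matrix.mulVec_mulVec, Matrix.mulVec_mulVec, hΨ, Matrix.one_mulVec]
  have hb : b = c - e := by
    rw [hbdef, hcdef, hΔψ, ← hb1]
    simp [Matrix.mulVec_sub]
  have hc0 : c 0 = α1 := by
    have h1 : α1 = ψ1 ⬝ᵥ (Sy *ᵥ ψt) := by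
      rw [hα1, Matrix.dotProduct_mulVec,
        show ψt ᵥ* Sy = Sy *ᵥ ψt from by rw [← Matrix.vecMul_transpose, hSyt],
        dotProduct_comm]
    rw [h1, hcdef]
    simp [Matrix.mulVec, dotProduct, hψ1, Matrix.transpose_apply]
  have hcc : c ⬝ᵥ c ≤ 1 := by
    have := bessel Sy hSypd Ψ hΨ ψt
    rw [hψt] at this
    exact this
  have haa : a ⬝ᵥ a ≤ Δφ' ⬝ᵥ (Sx *ᵥ Δφ') := bessel Sx hSxpd Φ hΦ Δφ'
  have hLHS : Δφ' ⬝ᵥ (Sxy *ᵥ Δψ) = ∑ i, (l i * b i) * a i := by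
    rw [hdecomp]
    simp only [← Matrix.mulVec_mulVec]
    rw [Matrix.dotProduct_mulVec Δφ' Sx, ← Matrix.mulVec_transpose, hSxt,
      Matrix.dotProduct_mulVec _ Φ, ← Matrix.mulVec_transpose Φ]
    simp only [← hadef, ← hbdef]
    simp [dotProduct, Matrix.mulVec_diagonal, mul_comm]
  -- bound on the lambda part
  have hb0 : b 0 = α1 - 1 := by
    rw [hb]
    simp [hedef, hc0]
  have hsq : ∀ i ∈ Finset.univ.erase (0 : Fin p), (l i * b i) ^ 2 ≤ lam2 ^ 2 * c i ^ 2 := by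
    intro i hi
    have hne : i ≠ 0 := Finset.ne_of_mem_erase hi
    have hbi : b i = c i := by
      rw [hb]; simp [hedef, Pi.single_eq_of_ne hne]
    have hli : l i ^ 2 ≤ lam2 ^ 2 := pow_le_pow_left₀ (hlnn i) (hl2 i hne) 2
    calc (l i * b i) ^ 2 = l i ^ 2 * c i ^ 2 := by rw [hbi]; ring
      _ ≤ lam2 ^ 2 * c i ^ 2 := mul_le_mul_of_nonneg_right hli (sq_nonneg _)
  have hcsum : ∑ i ∈ Finset.univ.erase (0 : Fin p), c i ^ 2 ≤ 1 - α1 ^ 2 := by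
    have h4 : c 0 ^ 2 + ∑ i ∈ Finset.univ.erase (0 : Fin p), c i ^ 2 = ∑ i, c i ^ 2 :=
      Finset.add_sum_erase _ (fun i => c i ^ 2) (Finset.mem_univ 0)
    have h5 : ∑ i, c i ^ 2 ≤ 1 := by
      have hcd : c ⬝ᵥ c = ∑ i, c i ^ 2 := by simp [dotProduct, sq]
      linarith [hcc, hcd ▸ hcc]
    rw [hc0] at h4
    linarith
  have hL : ∑ i, (l i * b i) ^ 2 ≤ lam1 ^ 2 * (1 - α1) ^ 2 + lam2 ^ 2 * (1 - α1 ^ 2) := by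
    have hsplit : (l 0 * b 0) ^ 2 + ∑ i ∈ Finset.univ.erase (0 : Fin p), (l i * b i) ^ 2
        = ∑ i, (l i * b i) ^ 2 :=
      Finset.add_sum_erase _ (fun i => (l i * b i) ^ 2) (Finset.mem_univ 0)
    have h7 : (l 0 * b 0) ^ 2 = lam1 ^ 2 * (1 - α1) ^ 2 := by
      rw [hb0, hlam1]; ring
    have h8 : ∑ i ∈ Finset.univ.erase (0 : Fin p), (l i * b i) ^ 2
        ≤ lam2 ^ 2 * (1 - α1 ^ 2) := by
      calc ∑ i ∈ Finset.univ.erase (0 : Fin p), (l i * b i) ^ 2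
          ≤ ∑ i ∈ Finset.univ.erase (0 : Fin p), lam2 ^ 2 * c i ^ 2 :=
            Finset.sum_le_sum hsq
        _ = lam2 ^ 2 * ∑ i ∈ Finset.univ.erase (0 : Fin p), c i ^ 2 :=
            (Finset.mul_sum _ _ _).symm
        _ ≤ lam2 ^ 2 * (1 - α1 ^ 2) := mul_le_mul_of_nonneg_left hcsum (sq_nonneg _)
    linarith
  have hA : ∑ i, a i ^ 2 ≤ Δφ' ⬝ᵥ (Sx *ᵥ Δφ') := by
    have had : a ⬝ᵥ a = ∑ i, a i ^ 2 := by simp [dotProduct, sq]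
    linarith [had ▸ haa]
  -- Cauchy–Schwarz
  have cs := Finset.sum_mul_sq_le_sq_mul_sq Finset.univ (fun i => l i * b i) a
  have hLnn : (0:ℝ) ≤ ∑ i, (l i * b i) ^ 2 := Finset.sum_nonneg fun i _ => sq_nonneg _
  have hAnn : (0:ℝ) ≤ ∑ i, a i ^ 2 := Finset.sum_nonneg fun i _ => sq_nonneg _
  have step1 : Δφ' ⬝ᵥ (Sxy *ᵥ Δψ) ≤
      Real.sqrt (∑ i, (l i * b i) ^ 2) * Real.sqrt (∑ i, a i ^ 2) := by
    rw [hLHS]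
    calc (∑ i, (l i * b i) * a i)
        ≤ |∑ i, (l i * b i) * a i| := le_abs_self _
      _ = Real.sqrt ((∑ i, (l i * b i) * a i) ^ 2) := (Real.sqrt_sq_eq_abs _).symm
      _ ≤ Real.sqrt ((∑ i, (l i * b i) ^ 2) * ∑ i, a i ^ 2) := Real.sqrt_le_sqrt cs
      _ = Real.sqrt (∑ i, (l i * b i) ^ 2) * Real.sqrt (∑ i, a i ^ 2) :=
          Real.sqrt_mul hLnn _
  refine step1.trans (mul_le_mul (Real.sqrt_le_sqrt hL) (Real.sqrt_le_sqrt hA)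
    (Real.sqrt_nonneg _) (Real.sqrt_nonneg _))
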